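/- An element v of the group algebra ℚ[Z_n²] satisfies A · v = v for every A ∈ SL₂(ℤ) if and only if v lies in the ℚ-linear span of the elements {T_k : k | n}. -/

import Mathlib

noncomputable section

/-- The action of a matrix `A ∈ SL₂(ℤ)` on `Z_n² = ZMod n × ZMod n`, given by
reducing the matrix modulo `n` and multiplying vectors. -/
def sl2Hom (n : ℕ) (A : Matrix.SpecialLinearGroup (Fin 2) ℤ) :
    (ZMod n × ZMod n) →+ (ZMod n × ZMod n) where
  toFun x := (((A.1 0 0 : ℤ) : ZMod n) * x.1 + ((A.1 0 1 : ℤ) : ZMod n) * x.2,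
              ((A.1 1 0 : ℤ) : ZMod n) * x.1 + ((A.1 1 1 : ℤ) : ZMod n) * x.2)
  map_zero' := by simp
  map_add' x y := by
    simp only [Prod.fst_add, Prod.snd_add, Prod.mk_add_mk, Prod.mk.injEq]
    constructor <;> ring

/-- `T_K := |K|⁻¹ • ∑_{θ ∈ K} (θ)` in the group algebra `ℚ[Z_n²]`. -/
noncomputable def TK (n : ℕ) (K : AddSubgroup (ZMod n × ZMod n)) :
    AddMonoidAlgebra ℚ (ZMod n × ZMod n) :=
  AddMonoidAlgebra.ofCoeff ((Nat.card K : ℚ)⁻¹ •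
    ∑ᶠ θ ∈ (K : Set (ZMod n × ZMod n)), Finsupp.single θ (1 : ℚ))

/-- The `k`-torsion subgroup `{x ∈ Z_n² : k • x = 0}`. -/
def torsionSub (n k : ℕ) : AddSubgroup (ZMod n × ZMod n) where
  carrier := {x | k • x = 0}
  zero_mem' := smul_zero k
  add_mem' := by
    intro a b ha hb
    simp only [Set.mem_setOf_eq, smul_add] at *
    rw [ha, hb, add_zero]
  neg_mem' := by
    intro a ha
    simp only [Set.mem_setOf_eq, smul_neg] at *
    rw [ha, neg_zero]

/-- `T_k := T_K` for `K` the `k`-torsion subgroup of `Z_n²`. -/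
noncomputable def Tk (n k : ℕ) : AddMonoidAlgebra ℚ (ZMod n × ZMod n) :=
  TK n (torsionSub n k)

lemma bezout_mat (α β : ℤ) :
    ∃ A : Matrix.SpecialLinearGroup (Fin 2) ℤ,
      A.1 0 0 * α + A.1 0 1 * β = Int.gcd α β ∧ A.1 1 0 * α + A.1 1 1 * β = 0 := by
  by_cases h0 : α = 0 ∧ β = 0
  · refine ⟨1, ?_, ?_⟩ <;> simp [h0.1, h0.2]
  · have hg0 : (Int.gcd α β : ℤ) ≠ 0 := by
      intro h
      exact h0 (Int.gcd_eq_zero_iff.mp (by exact_mod_cast h))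
    obtain ⟨α', hα⟩ : (Int.gcd α β : ℤ) ∣ α := Int.gcd_dvd_left α β
    obtain ⟨β', hβ⟩ : (Int.gcd α β : ℤ) ∣ β := Int.gcd_dvd_right α β
    have hbez : (Int.gcd α β : ℤ) = α * Int.gcdA α β + β * Int.gcdB α β := Int.gcd_eq_gcd_ab α β
    have hkey : Int.gcdA α β * α' + Int.gcdB α β * β' = 1 := by
      have h2 : (Int.gcd α β : ℤ) * (Int.gcdA α β * α' + Int.gcdB α β * β')
          = (Int.gcd α β : ℤ) * 1 := by
        linear_combination (-hbez) - Int.gcdA α β * hα - Int.gcdB α β * hβ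
      exact mul_left_cancel₀ hg0 h2
    refine ⟨⟨!![Int.gcdA α β, Int.gcdB α β; -β', α'], ?_⟩, ?_, ?_⟩
    · rw [Matrix.det_fin_two_of]; linear_combination hkey
    · show Int.gcdA α β * α + Int.gcdB α β * β = _
      linear_combination -hbez
    · show -β' * α + α' * β = 0
      linear_combination α' * hβ - β' * hα

lemma sl2Hom_mul (n : ℕ) (A B : Matrix.SpecialLinearGroup (Fin 2) ℤ) (x : ZMod n × ZMod n) :
    sl2Hom n (A * B) x = sl2Hom n A (sl2Hom n B x) := by
  simp only [sl2Hom, AddMonoidHom.coe_mk, ZeroHom.coe_mk, Matrix.SpecialLinearGroup.coe_mul,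
    Matrix.mul_apply, Fin.sum_univ_two, Prod.mk.injEq]
  constructor <;> push_cast <;> ring

lemma sl2Hom_one (n : ℕ) (x : ZMod n × ZMod n) : sl2Hom n 1 x = x := by
  simp [sl2Hom, Matrix.SpecialLinearGroup.coe_one, Matrix.one_apply]

lemma sl2Hom_inj (n : ℕ) (A : Matrix.SpecialLinearGroup (Fin 2) ℤ) :
    Function.Injective (sl2Hom n A) := by
  intro x y h
  have := congrArg (sl2Hom n A⁻¹) h
  rwa [← sl2Hom_mul, ← sl2Hom_mul, inv_mul_cancel, sl2Hom_one, sl2Hom_one] at this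

lemma sl2_apply_cast (n : ℕ) (A : Matrix.SpecialLinearGroup (Fin 2) ℤ) (α β : ℤ) :
    sl2Hom n A ((α : ZMod n), (β : ZMod n)) =
      (((A.1 0 0 * α + A.1 0 1 * β : ℤ) : ZMod n),
       ((A.1 1 0 * α + A.1 1 1 * β : ℤ) : ZMod n)) := by
  simp only [sl2Hom, AddMonoidHom.coe_mk, ZeroHom.coe_mk, Prod.mk.injEq]
  constructor <;> push_cast <;> ring

/-- the gcd invariant of a vector -/
def gInv (n : ℕ) (x : ZMod n × ZMod n) : ℕ := Nat.gcd (Nat.gcd x.1.val x.2.val) n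

lemma gInv_dvd (n : ℕ) (x : ZMod n × ZMod n) : gInv n x ∣ n := Nat.gcd_dvd_right _ _

lemma exists_orbit (n : ℕ) [NeZero n] (x : ZMod n × ZMod n) :
    ∃ A, sl2Hom n A x = (((gInv n x : ℕ) : ZMod n), 0) := by
  obtain ⟨A1, h1, h2⟩ := bezout_mat (x.1.val : ℤ) (x.2.val : ℤ)
  obtain ⟨A2, h3, h4⟩ := bezout_mat ((Nat.gcd x.1.val x.2.val : ℕ) : ℤ) (n : ℤ)
  refine ⟨A2 * A1, ?_⟩
  have hx : x = (((x.1.val : ℤ) : ZMod n), ((x.2.val : ℤ) : ZMod n)) := by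
    push_cast
    rw [ZMod.natCast_val, ZMod.natCast_val, ZMod.cast_id, ZMod.cast_id]
  rw [sl2Hom_mul, hx, sl2_apply_cast, h1, h2]
  have hg1 : Int.gcd (x.1.val : ℤ) (x.2.val : ℤ) = Nat.gcd x.1.val x.2.val :=
    Int.gcd_natCast_natCast _ _
  rw [hg1]
  have h0 : ((0 : ℤ) : ZMod n) = ((n : ℤ) : ZMod n) := by push_cast; simp
  rw [h0, sl2_apply_cast, h3, h4]
  have hg2 : Int.gcd ((Nat.gcd x.1.val x.2.val : ℕ) : ℤ) (n : ℤ)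
      = Nat.gcd (Nat.gcd x.1.val x.2.val) n := Int.gcd_natCast_natCast _ _
  rw [hg2]
  simp [gInv]

lemma addOrderOf_sl2 (n : ℕ) (A : Matrix.SpecialLinearGroup (Fin 2) ℤ) (x : ZMod n × ZMod n) :
    addOrderOf (sl2Hom n A x) = addOrderOf x :=
  addOrderOf_injective (sl2Hom n A) (sl2Hom_inj n A) x

lemma addOrderOf_inl (n : ℕ) (c : ZMod n) :
    addOrderOf ((c, 0) : ZMod n × ZMod n) = addOrderOf c :=
  addOrderOf_injective (AddMonoidHom.inl (ZMod n) (ZMod n))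
    (fun a b h => congrArg Prod.fst h) c

lemma addOrderOf_eq (n : ℕ) [NeZero n] (x : ZMod n × ZMod n) :
    addOrderOf x = n / gInv n x := by
  obtain ⟨A, hA⟩ := exists_orbit n x
  rw [← addOrderOf_sl2 n A x, hA, addOrderOf_inl,
    ZMod.addOrderOf_coe _ (NeZero.ne n), Nat.gcd_comm]
  rw [Nat.gcd_eq_left (gInv_dvd n x)]

lemma exists_orbit_of_order_eq (n : ℕ) [NeZero n] (x y : ZMod n × ZMod n)
    (h : addOrderOf x = addOrderOf y) : ∃ A, sl2Hom n A x = y := by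
  have hg : gInv n x = gInv n y := by
    have hx := addOrderOf_eq n x
    have hy := addOrderOf_eq n y
    rw [hx, hy] at h
    have e1 : gInv n x = n / (n / gInv n x) :=
      (Nat.div_div_self (gInv_dvd n x) (NeZero.ne n)).symm
    rw [e1, h, Nat.div_div_self (gInv_dvd n y) (NeZero.ne n)]
  obtain ⟨A, hA⟩ := exists_orbit n x
  obtain ⟨B, hB⟩ := exists_orbit n y
  refine ⟨B⁻¹ * A, ?_⟩
  rw [sl2Hom_mul, hA, hg, ← hB, ← sl2Hom_mul, inv_mul_cancel, sl2Hom_one]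

noncomputable def Ksum (n k : ℕ) [NeZero n] : AddMonoidAlgebra ℚ (ZMod n × ZMod n) :=
  ∑ θ ∈ Finset.univ.filter (fun θ : ZMod n × ZMod n => k • θ = 0), AddMonoidAlgebra.single θ 1

noncomputable def Osum (n k : ℕ) [NeZero n] : AddMonoidAlgebra ℚ (ZMod n × ZMod n) :=
  ∑ θ ∈ Finset.univ.filter (fun θ : ZMod n × ZMod n => addOrderOf θ = k), AddMonoidAlgebra.single θ 1

lemma torsion_coe (n k : ℕ) [NeZero n] :
    (torsionSub n k : Set (ZMod n × ZMod n)) =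
      ↑(Finset.univ.filter (fun θ : ZMod n × ZMod n => k • θ = 0)) := by
  ext θ
  simp [torsionSub, AddSubgroup.mem_carrier]

lemma Tk_eq (n k : ℕ) [NeZero n] :
    Tk n k = ((Finset.univ.filter
        (fun θ : ZMod n × ZMod n => k • θ = 0)).card : ℚ)⁻¹ • Ksum n k := by
  rw [Tk, TK, Ksum]
  apply AddMonoidAlgebra.coeff_injective
  simp only [AddMonoidAlgebra.coeff_ofCoeff, AddMonoidAlgebra.coeff_smul,
    AddMonoidAlgebra.coeff_sum, AddMonoidAlgebra.coeff_single]
  congr 1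
  · rw [show Nat.card (torsionSub n k) = Nat.card (torsionSub n k : Set (ZMod n × ZMod n)) from rfl,
      Nat.card_coe_set_eq, torsion_coe, Set.ncard_coe_finset]
  · rw [torsion_coe, finsum_mem_coe_finset]

lemma Ksum_card_ne (n k : ℕ) [NeZero n] :
    ((Finset.univ.filter (fun θ : ZMod n × ZMod n => k • θ = 0)).card : ℚ) ≠ 0 := by
  have : (0 : ZMod n × ZMod n) ∈ Finset.univ.filter (fun θ : ZMod n × ZMod n => k • θ = 0) := by
    simp
  have := Finset.card_pos.mpr ⟨0, this⟩
  positivity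

lemma Ksum_mem (n k : ℕ) [NeZero n] (hk : k ∣ n) :
    Ksum n k ∈ Submodule.span ℚ
      {x : AddMonoidAlgebra ℚ (ZMod n × ZMod n) | ∃ k', k' ∣ n ∧ x = Tk n k'} := by
  have h1 : Tk n k ∈ Submodule.span ℚ
      {x : AddMonoidAlgebra ℚ (ZMod n × ZMod n) | ∃ k', k' ∣ n ∧ x = Tk n k'} :=
    Submodule.subset_span ⟨k, hk, rfl⟩
  have h2 : Ksum n k = ((Finset.univ.filter
      (fun θ : ZMod n × ZMod n => k • θ = 0)).card : ℚ) • Tk n k := by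
    rw [Tk_eq, smul_inv_smul₀ (Ksum_card_ne n k)]
  rw [h2]
  exact Submodule.smul_mem _ _ h1

lemma Ksum_eq (n k : ℕ) [NeZero n] (hk : k ≠ 0) :
    Ksum n k = ∑ d ∈ k.divisors, Osum n d := by
  rw [Ksum, ← Finset.sum_fiberwise_of_maps_to (g := addOrderOf) (t := k.divisors)
    (fun θ hθ => by
      simp only [Finset.mem_filter, Finset.mem_univ, true_and] at hθ
      exact Nat.mem_divisors.mpr ⟨addOrderOf_dvd_iff_nsmul_eq_zero.mpr hθ, hk⟩)
    (fun θ => AddMonoidAlgebra.single θ (1 : ℚ))]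
  refine Finset.sum_congr rfl fun d hd => ?_
  rw [Osum]
  refine Finset.sum_congr ?_ fun _ _ => rfl
  ext θ
  simp only [Finset.mem_filter, Finset.mem_univ, true_and]
  constructor
  · rintro ⟨-, h⟩; exact h
  · intro h
    exact ⟨addOrderOf_dvd_iff_nsmul_eq_zero.mp
      (h ▸ (Nat.mem_divisors.mp hd).1), h⟩

lemma Osum_mem (n : ℕ) [NeZero n] : ∀ k, k ∣ n → Osum n k ∈ Submodule.span ℚ
    {x : AddMonoidAlgebra ℚ (ZMod n × ZMod n) | ∃ k', k' ∣ n ∧ x = Tk n k'} := by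
  intro k
  induction k using Nat.strong_induction_on with
  | _ k ih =>
    intro hk
    have hk0 : k ≠ 0 := by rintro rfl; exact NeZero.ne n (zero_dvd_iff.mp hk)
    have heq : Osum n k = Ksum n k - ∑ d ∈ k.divisors.erase k, Osum n d := by
      rw [Ksum_eq n k hk0, ← Finset.sum_erase_add _ _ (Nat.mem_divisors_self k hk0)]
      abel
    rw [heq]
    refine Submodule.sub_mem _ (Ksum_mem n k hk) (Submodule.sum_mem _ fun d hd => ?_)
    have hdk : d ∣ k := (Nat.mem_divisors.mp (Finset.mem_of_mem_erase hd)).1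
    exact ih d (lt_of_le_of_ne (Nat.le_of_dvd (Nat.pos_of_ne_zero hk0) hdk)
      (Finset.ne_of_mem_erase hd)) (hdk.trans hk)

lemma mapDomain_Ksum (n k : ℕ) [NeZero n] (A : Matrix.SpecialLinearGroup (Fin 2) ℤ) :
    Finsupp.mapDomain (sl2Hom n A) (Ksum n k).coeff = (Ksum n k).coeff := by
  rw [Ksum, AddMonoidAlgebra.coeff_sum, ← Finsupp.mapDomain.addMonoidHom_apply, map_sum]
  simp only [Finsupp.mapDomain.addMonoidHom_apply, AddMonoidAlgebra.coeff_single,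
    Finsupp.mapDomain_single]
  refine Finset.sum_nbij' (fun θ => sl2Hom n A θ) (fun θ => sl2Hom n A⁻¹ θ)
    ?_ ?_ ?_ ?_ ?_
  · intro θ hθ
    simp only [Finset.mem_filter, Finset.mem_univ, true_and] at *
    rw [← map_nsmul, hθ, map_zero]
  · intro θ hθ
    simp only [Finset.mem_filter, Finset.mem_univ, true_and] at *
    rw [← map_nsmul, hθ, map_zero]
  · intro θ _
    show sl2Hom n A⁻¹ (sl2Hom n A θ) = θ
    rw [← sl2Hom_mul, inv_mul_cancel, sl2Hom_one]
  · intro θ _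
    show sl2Hom n A (sl2Hom n A⁻¹ θ) = θ
    rw [← sl2Hom_mul, mul_inv_cancel, sl2Hom_one]
  · intro θ _
    rfl

lemma mapDomain_Tk (n k : ℕ) [NeZero n] (A : Matrix.SpecialLinearGroup (Fin 2) ℤ) :
    Finsupp.mapDomain (sl2Hom n A) (Tk n k).coeff = (Tk n k).coeff := by
  rw [Tk_eq, AddMonoidAlgebra.coeff_smul, Finsupp.mapDomain_smul, mapDomain_Ksum]

def repv (n k : ℕ) : ZMod n × ZMod n := (((n / k : ℕ) : ZMod n), 0)

lemma addOrderOf_repv (n k : ℕ) [NeZero n] (hk : k ∣ n) (hk0 : k ≠ 0) :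
    addOrderOf (repv n k) = k := by
  rw [repv, addOrderOf_inl, ZMod.addOrderOf_coe _ (NeZero.ne n),
    Nat.gcd_eq_right (Nat.div_dvd_of_dvd hk), Nat.div_div_self hk (NeZero.ne n)]


/-- An element `v` of the group algebra `ℚ[Z_n²]` is invariant under every
`A ∈ SL₂(ℤ)` if and only if it lies in the ℚ-linear span of `{T_k : k ∣ n}`. -/
theorem statement11 (n : ℕ) (hn : 1 ≤ n)
    (v : AddMonoidAlgebra ℚ (ZMod n × ZMod n)) :
    (∀ A : Matrix.SpecialLinearGroup (Fin 2) ℤ,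
        Finsupp.mapDomain (sl2Hom n A) v.coeff = v.coeff) ↔
      v ∈ Submodule.span ℚ
        {x : AddMonoidAlgebra ℚ (ZMod n × ZMod n) | ∃ k, k ∣ n ∧ x = Tk n k} := by
  have : NeZero n := ⟨by omega⟩
  constructor
  · intro hv
    have hconst : ∀ x y : ZMod n × ZMod n, addOrderOf x = addOrderOf y → v.coeff x = v.coeff y := by
      intro x y h
      obtain ⟨A, hA⟩ := exists_orbit_of_order_eq n x y h
      exact (calc v.coeff y = v.coeff (sl2Hom n A x) := by rw [hA]
        _ = (Finsupp.mapDomain (sl2Hom n A) v.coeff) (sl2Hom n A x) := by rw [hv A]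
        _ = v.coeff x := Finsupp.mapDomain_apply (sl2Hom_inj n A) v.coeff x).symm
    have hdecomp : v = ∑ k ∈ n.divisors, v.coeff (repv n k) • Osum n k := by
      have h1 : v = ∑ θ ∈ Finset.univ, AddMonoidAlgebra.single θ (v.coeff θ) := by
        conv_lhs => rw [← AddMonoidAlgebra.sum_coeff_single v]
        rw [Finsupp.sum]
        exact Finset.sum_subset (Finset.subset_univ _)
          (fun θ _ hθ => by rw [Finsupp.notMem_support_iff.mp hθ, AddMonoidAlgebra.single_zero])
      refine h1.trans ?_
      rw [← Finset.sum_fiberwise_of_maps_to (g := addOrderOf) (t := n.divisors)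
        (fun θ _ => Nat.mem_divisors.mpr ⟨addOrderOf_dvd_iff_nsmul_eq_zero.mpr
          (by simp [Prod.ext_iff, nsmul_eq_mul]), NeZero.ne n⟩)
        (fun θ => AddMonoidAlgebra.single θ (v.coeff θ))]
      refine Finset.sum_congr rfl fun k hk => ?_
      obtain ⟨hkd, -⟩ := Nat.mem_divisors.mp hk
      have hk0 : k ≠ 0 := Nat.pos_of_mem_divisors hk |>.ne'
      rw [Osum, Finset.smul_sum]
      refine Finset.sum_congr rfl fun θ hθ => ?_
      simp only [Finset.mem_filter, Finset.mem_univ, true_and] at hθ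
      have : v.coeff θ = v.coeff (repv n k) :=
        hconst θ (repv n k) (by rw [hθ, addOrderOf_repv n k hkd hk0])
      rw [this, AddMonoidAlgebra.smul_single, smul_eq_mul, mul_one]
    rw [hdecomp]
    exact Submodule.sum_mem _ fun k hk =>
      Submodule.smul_mem _ _ (Osum_mem n k (Nat.mem_divisors.mp hk).1)
  · intro hv A
    induction hv using Submodule.span_induction with
    | mem x hx =>
      obtain ⟨k, hk, rfl⟩ := hx
      exact mapDomain_Tk n k A
    | zero => exact Finsupp.mapDomain_zero
    | add x y hx hy ihx ihy => rw [AddMonoidAlgebra.coeff_add, Finsupp.mapDomain_add, ihx, ihy]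
    | smul c x hx ihx => rw [AddMonoidAlgebra.coeff_smul, Finsupp.mapDomain_smul, ihx]


end
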